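/- Let f, g, h be polynomials with integer coefficients such that h = g·f. If h and g are both unicyclic, then f is unicyclic. -/

import Mathlib

open Polynomial

/-- A polynomial with integer coefficients is *unicyclic* if its constant coefficient is `1`
and there is an integer `k` such that its linear coefficient is `k` and its quadratic
coefficient is `C(k,2) - k`. -/
def Unicyclic (p : Polynomial ℤ) : Prop :=
  p.coeff 0 = 1 ∧ ∃ k : ℤ, p.coeff 1 = k ∧ 2 * p.coeff 2 = k * (k - 1) - 2 * k

theorem unicyclic_of_factor (f g h : Polynomial ℤ) (hfg : h = g * f)
    (hh : Unicyclic h) (hg : Unicyclic g) : Unicyclic f := by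
  obtain ⟨h0, kh, h1, h2⟩ := hh
  obtain ⟨g0, kg, g1, g2⟩ := hg
  have e0 : h.coeff 0 = g.coeff 0 * f.coeff 0 := by simp [hfg, mul_coeff_zero]
  have e1 : h.coeff 1 = g.coeff 0 * f.coeff 1 + g.coeff 1 * f.coeff 0 := by
    rw [hfg, coeff_mul, show Finset.HasAntidiagonal.antidiagonal 1 = {(0,1),(1,0)} by decide,
      Finset.sum_insert (by decide), Finset.sum_singleton]
  have e2 : h.coeff 2 = g.coeff 0 * f.coeff 2 + g.coeff 1 * f.coeff 1
      + g.coeff 2 * f.coeff 0 := by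
    rw [hfg, coeff_mul, show Finset.HasAntidiagonal.antidiagonal 2 = {(0,2),(1,1),(2,0)} by decide,
      Finset.sum_insert (by decide), Finset.sum_insert (by decide), Finset.sum_singleton]
    ring
  rw [g0, one_mul] at e0 e1 e2
  have f0 : f.coeff 0 = 1 := by rw [← e0, h0]
  rw [f0, mul_one] at e1 e2
  have f1 : f.coeff 1 = kh - kg := by rw [h1, g1] at e1; linarith
  refine ⟨f0, kh - kg, f1, ?_⟩
  rw [g1, f1] at e2
  nlinarith [e2, h2, g2]
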